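/- Let N ≥ 3, let F be the N×N DFT matrix with entries exp(−2πi·jk/N), let I ⊆ ℤ/Nℤ be a set of sampled frequencies with 0 ∈ I, and let A be the matrix formed by the rows of F indexed by I. Let d ∈ ℂ^{ℤ/Nℤ} be the vector with d(0) = −2, d(1) = 1, d(−1) = 1 and d(k) = 0 otherwise, and let Δ be the circulant matrix with first column d. Then ker A ∩ ker Δ = {0}: any x ∈ ℂ^{ℤ/Nℤ} with Ax = 0 and Δx = 0 is zero. -/

import Mathlib

open Matrix

/-- For `N ≥ 3`, a set `I` of sampled frequencies with `0 ∈ I`, the partial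
Fourier matrix `A` formed by the rows of the DFT matrix `F` indexed by `I`, and the circular
Laplacian `Δ` (circulant matrix with first column `d`, `d 0 = −2`, `d 1 = d (−1) = 1`,
`d k = 0` otherwise), one has `ker A ∩ ker Δ = {0}`: any `x` with `Ax = 0` and `Δx = 0`
is zero. -/
theorem stmt15 {N : ℕ} [NeZero N] (hN : 3 ≤ N)
    (F : Matrix (ZMod N) (ZMod N) ℂ)
    (hF : ∀ j k : ZMod N,
      F j k = Complex.exp (-2 * Real.pi * Complex.I * (j.val * k.val) / N))
    (I : Finset (ZMod N)) (hI : (0 : ZMod N) ∈ I)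
    (A : Matrix {k : ZMod N // k ∈ I} (ZMod N) ℂ)
    (hA : ∀ (i : {k : ZMod N // k ∈ I}) (k : ZMod N), A i k = F i.val k)
    (d : ZMod N → ℂ)
    (hd0 : d 0 = -2) (hd1 : d 1 = 1) (hdm1 : d (-1) = 1)
    (hd : ∀ k : ZMod N, k ≠ 0 → k ≠ 1 → k ≠ -1 → d k = 0)
    (Δ : Matrix (ZMod N) (ZMod N) ℂ) (hΔ : Δ = Matrix.circulant d) :
    ∀ x : ZMod N → ℂ, A.mulVec x = 0 → Δ.mulVec x = 0 → x = 0 := by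
  intro x hAx hΔx
  haveI : Fact (1 < N) := ⟨by omega⟩
  have h10 : (1 : ZMod N) ≠ 0 := one_ne_zero
  have hm10 : (-1 : ZMod N) ≠ 0 := by simpa [neg_eq_zero] using h10
  have h1m1 : (1 : ZMod N) ≠ -1 := by
    intro h
    have h2 : ((2 : ℕ) : ZMod N) = 0 := by push_cast; linear_combination h
    rw [ZMod.natCast_eq_zero_iff] at h2
    have := Nat.le_of_dvd (by norm_num) h2
    omega
  -- the recurrence from Δx = 0
  have hrec : ∀ j : ZMod N, x (j - 1) + x (j + 1) = 2 * x j := by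
    intro j
    have h := congrFun hΔx j
    rw [hΔ] at h
    have hsum : ∑ k : ZMod N, d (j - k) * x k = ∑ m : ZMod N, d m * x (j - m) :=
      Fintype.sum_equiv (Equiv.subLeft j) _ _ (fun m => by simp)
    have h2 : ∑ m : ZMod N, d m * x (j - m) = 0 := by
      rw [← hsum]
      simpa [Matrix.mulVec, Matrix.circulant, dotProduct] using h
    have h3 : ∑ m : ZMod N, d m * x (j - m)
        = ∑ m ∈ ({0, 1, -1} : Finset (ZMod N)), d m * x (j - m) := by
      refine (Finset.sum_subset (Finset.subset_univ _) ?_).symm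
      intro m _ hm
      simp only [Finset.mem_insert, Finset.mem_singleton, not_or] at hm
      rw [hd m hm.1 hm.2.1 hm.2.2, zero_mul]
    rw [h3, Finset.sum_insert (by simp [h10.symm, hm10.symm]),
        Finset.sum_insert (by simp [h1m1]), Finset.sum_singleton,
        hd0, hd1, hdm1, sub_zero, sub_neg_eq_add] at h2
    linear_combination h2
  -- successive differences are constant
  have hy : ∀ j : ZMod N, x (j + 1) - x j = x 1 - x 0 := by
    have step : ∀ j : ZMod N, x (j + 1) - x j = x j - x (j - 1) := by
      intro j; linear_combination hrec j
    have hnat : ∀ n : ℕ, x ((n : ZMod N) + 1) - x (n : ZMod N) = x 1 - x 0 := by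
      intro n
      induction n with
      | zero => simp
      | succ m ih =>
        push_cast
        rw [step ((m : ZMod N) + 1)]
        simpa using ih
    intro j
    have hj : ((j.val : ℕ) : ZMod N) = j := by
      simpa using (ZMod.natCast_val j).trans (ZMod.cast_id N j)
    rw [← hj]; exact hnat j.val
  -- telescoping sum forces the difference to vanish
  have hsum0 : ∑ j : ZMod N, (x (j + 1) - x j) = 0 := by
    rw [Finset.sum_sub_distrib]
    have : ∑ j : ZMod N, x (j + 1) = ∑ j : ZMod N, x j :=
      Fintype.sum_equiv (Equiv.addRight 1) _ _ (fun j => rfl)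
    rw [this, sub_self]
  have hNne : (N : ℂ) ≠ 0 := Nat.cast_ne_zero.mpr (NeZero.ne N)
  have hconst0 : x 1 - x 0 = 0 := by
    have hs : ∑ j : ZMod N, (x (j + 1) - x j) = (N : ℂ) * (x 1 - x 0) := by
      rw [Finset.sum_congr rfl (fun j _ => hy j)]
      simp [Finset.sum_const, ZMod.card, mul_comm]
      ring
    rw [hsum0] at hs
    exact (mul_eq_zero.mp hs.symm).resolve_left hNne
  -- x is constant
  have hconst : ∀ j : ZMod N, x j = x 0 := by
    have step : ∀ j : ZMod N, x (j + 1) = x j := fun j =>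
      sub_eq_zero.mp (by rw [hy j, hconst0])
    have hnat : ∀ n : ℕ, x ((n : ℕ) : ZMod N) = x 0 := by
      intro n
      induction n with
      | zero => simp
      | succ m ih => push_cast; rw [step]; exact ih
    intro j
    have hj : ((j.val : ℕ) : ZMod N) = j := by
      simpa using (ZMod.natCast_val j).trans (ZMod.cast_id N j)
    rw [← hj]; exact hnat j.val
  -- row 0 of A gives the sum of x
  have hrow := congrFun hAx ⟨0, hI⟩
  have hrow' : ∑ k : ZMod N, x k = 0 := by
    have hA0 : ∀ k : ZMod N, A ⟨0, hI⟩ k = 1 := by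
      intro k
      rw [hA, hF]
      simp [ZMod.val_zero]
    simpa [Matrix.mulVec, dotProduct, hA0] using hrow
  have hx0 : x 0 = 0 := by
    have : (N : ℂ) * x 0 = 0 := by
      rw [← hrow', Finset.sum_congr rfl (fun k _ => hconst k)]
      simp [Finset.sum_const, ZMod.card, mul_comm]
    exact (mul_eq_zero.mp this).resolve_left hNne
  funext j
  rw [hconst j, hx0]; rfl
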